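/- Let p be a positive integer and t₂, t₃ ∈ ℂ with Z = [[p·t₂, t₂], [t₂, t₃]] ∈ ℍ₂. Then the set of s ∈ ℂ such that (0, s) ∈ Λ_Z is exactly the lattice ℤ·(p·t₃ − t₂) + ℤ. Consequently the ℂ-linear map ℂ → ℂ², s ↦ (0, s), induces an injective homomorphism from the elliptic curve ℂ/(ℤ·(p·t₃ − t₂) + ℤ) into the complex torus ℂ²/Λ_Z. -/

import Mathlib

/-- For `Z = [[p t₂, t₂],[t₂, t₃]] ∈ ℍ₂`, the set of `s ∈ ℂ` with
`(0, s) ∈ Λ_Z` is exactly the lattice `ℤ(p t₃ − t₂) + ℤ`; hence `s ↦ (0, s)`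
induces an injective homomorphism `ℂ/(ℤ(p t₃ − t₂)+ℤ) → ℂ²/Λ_Z`. -/
theorem complementary_elliptic_curve_embeds
    (p : ℕ) (hp : 0 < p) (t₂ t₃ : ℂ)
    (hpos : ((!![(p : ℂ) * t₂, t₂; t₂, t₃]).map Complex.im).PosDef) :
    ∀ s : ℂ,
      (![0, s] ∈ Submodule.span ℤ
        ({![(p : ℂ) * t₂, t₂], ![t₂, t₃], ![1, 0], ![0, 1]} : Set (Fin 2 → ℂ)))
      ↔ s ∈ Submodule.span ℤ ({(p : ℂ) * t₃ - t₂, 1} : Set ℂ) := by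
  -- Im t₂ ≠ 0
  have him : t₂.im ≠ 0 := by
    have h := hpos.dotProduct_mulVec_pos (x := ![1, 0]) (by
      intro h; exact one_ne_zero (congrFun h 0))
    simp [dotProduct, Matrix.mulVec, Fin.sum_univ_two, Matrix.map_apply] at h
    have : 0 < (p : ℝ) * t₂.im := by
      simpa [Complex.mul_im] using h
    nlinarith
  intro s
  constructor
  · intro h
    rw [show ({![(p : ℂ) * t₂, t₂], ![t₂, t₃], ![1, 0], ![0, 1]} : Set (Fin 2 → ℂ))
        = insert ![(p : ℂ) * t₂, t₂] (insert ![t₂, t₃] (insert ![(1:ℂ), 0] {![0, 1]})) from rfl,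
      Submodule.mem_span_insert] at h
    obtain ⟨a, x, hx, hax⟩ := h
    rw [Submodule.mem_span_insert] at hx
    obtain ⟨b, y, hy, hby⟩ := hx
    rw [Submodule.mem_span_insert] at hy
    obtain ⟨c, z, hz, hcz⟩ := hy
    rw [Submodule.mem_span_singleton] at hz
    obtain ⟨d, hd⟩ := hz
    subst hd hcz hby
    have h0 := congrFun hax 0
    have h1 := congrFun hax 1
    simp [zsmul_eq_mul] at h0 h1
    -- h0 : 0 = a * (p * t₂) + (b * t₂ + c)
    have key : ((a * p + b : ℤ) : ℂ) * t₂ + (c : ℂ) = 0 := by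
      push_cast
      rw [eq_comm] at h0
      linear_combination h0
    have him2 : ((a * p + b : ℤ) : ℝ) * t₂.im = 0 := by
      have := congrArg Complex.im key
      simpa [Complex.add_im, Complex.mul_im] using this
    have hab : (a * p + b : ℤ) = 0 := by
      rcases mul_eq_zero.1 him2 with h | h
      · exact_mod_cast h
      · exact absurd h him
    have hc : (c : ℂ) = 0 := by
      rw [hab] at key; simpa using key
    have hb : (b : ℂ) = -(a * p) := by
      have : ((a*p+b : ℤ):ℂ) = 0 := by exact_mod_cast hab
      push_cast at this ⊢; linear_combination this
    have hs : s = (-a) • ((p:ℂ) * t₃ - t₂) + d • (1:ℂ) := by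
      simp only [zsmul_eq_mul]
      push_cast
      push_cast at hb hc
      rw [h1, hb]; ring
    rw [hs]
    refine Submodule.add_mem _ ?_ ?_ <;>
      exact Submodule.smul_mem _ _ (Submodule.subset_span (by simp))
  · intro h
    rw [show ({(p : ℂ) * t₃ - t₂, 1} : Set ℂ) = insert ((p:ℂ)*t₃ - t₂) {(1:ℂ)} from rfl,
      Submodule.mem_span_insert] at h
    obtain ⟨m, x, hx, hmx⟩ := h
    rw [Submodule.mem_span_singleton] at hx
    obtain ⟨n, hn⟩ := hx
    subst hn hmx
    have key : ![(0:ℂ), m • ((p:ℂ)*t₃ - t₂) + n • (1:ℂ)]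
        = (-m) • ![(p : ℂ) * t₂, t₂] + (m * p) • ![t₂, t₃] + n • ![(0:ℂ), 1] := by
      funext i
      fin_cases i <;>
        simp [zsmul_eq_mul] <;> push_cast <;> ring
    rw [key]
    refine Submodule.add_mem _ (Submodule.add_mem _ ?_ ?_) ?_ <;>
      exact Submodule.smul_mem _ _ (Submodule.subset_span (by simp))
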